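/- For any two simplicial complexes K and L with vertex set [m] and any field F, one has D̃(K;F) + D̃(L;F) ≤ D̃(K∩L;F) + D̃(K∪L;F), where all total bigraded Betti numbers are computed with respect to the ground set [m]. -/

import Mathlib

/-- An (abstract) simplicial complex: a collection of finite subsets of `ℕ`
closed under taking subsets. -/
def IsComplex (K : Finset (Finset ℕ)) : Prop :=
  ∀ σ ∈ K, ∀ τ ⊆ σ, τ ∈ K

/-- The vertex set of a complex: the union of all its simplices. -/
def verts (K : Finset (Finset ℕ)) : Finset ℕ := K.sup id

/-- The space of (augmented) simplicial `j`-chains: formal `F`-linear combinations of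
simplices of cardinality `j` (so chain degree `j` corresponds to dimension `j - 1`;
degree `0` is spanned by the empty simplex). -/
abbrev Chain (F : Type*) [Field F] (K : Finset (Finset ℕ)) (j : ℕ) : Type _ :=
  {σ // σ ∈ K.filter (fun σ => σ.card = j)} → F

/-- The simplicial boundary operator (of the augmented chain complex), with the usual
signs `(-1)^{position of the deleted vertex}`. -/
noncomputable def bdry (F : Type*) [Field F] (K : Finset (Finset ℕ)) (j : ℕ) :
    Chain F K (j + 1) →ₗ[F] Chain F K j where
  toFun c := fun τ =>
    ∑ v ∈ verts K,
      if h : v ∉ τ.1 ∧ insert v τ.1 ∈ K.filter (fun σ => σ.card = j + 1) then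
        (-1 : F) ^ ((τ.1.filter (fun u => u < v)).card) * c ⟨insert v τ.1, h.2⟩
      else 0
  map_add' c d := by
    funext τ
    show _ = (_ : F) + (_ : F)
    rw [← Finset.sum_add_distrib]
    refine Finset.sum_congr rfl fun v _ => ?_
    by_cases h : v ∉ τ.1 ∧ insert v τ.1 ∈ K.filter (fun σ => σ.card = j + 1)
    · rw [dif_pos h, dif_pos h, dif_pos h, ← mul_add]
      rfl
    · rw [dif_neg h, dif_neg h, dif_neg h, add_zero]
  map_smul' a c := by
    funext τ
    show _ = a * _
    rw [Finset.mul_sum]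
    refine Finset.sum_congr rfl fun v _ => ?_
    by_cases h : v ∉ τ.1 ∧ insert v τ.1 ∈ K.filter (fun σ => σ.card = j + 1)
    · rw [dif_pos h, dif_pos h]
      show _ * (a * _) = _
      ring
    · rw [dif_neg h, dif_neg h, mul_zero]

/-- The dimension of the `j`-th homology of the augmented simplicial chain complex of `K`.
Degree `j` corresponds to the reduced homology group `H̃_{j-1}` of the realization of `K`. -/
noncomputable def hBetti (F : Type*) [Field F] (K : Finset (Finset ℕ)) : ℕ → ℕ
  | 0 => Module.finrank F (Chain F K 0) - Module.finrank F (LinearMap.range (bdry F K 0))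
  | j + 1 =>
      Module.finrank F (LinearMap.ker (bdry F K j)) -
        Module.finrank F (LinearMap.range (bdry F K (j + 1)))

/-- The reduced total Betti number `t̃b(K; F) = ∑ i dim H̃ i (K; F)` of (the geometric
realization of) `K`, with the convention `t̃b(∅; F) = 1` (coming from `β̃₋₁(∅) = 1`;
note that if `K` is nonempty and closed under subsets then `∅ ∈ K` and the augmented
chain complex accounts for `β̃₋₁` automatically). -/
noncomputable def rtb (F : Type*) [Field F] (K : Finset (Finset ℕ)) : ℕ :=
  if K = ∅ then 1 else ∑ j ∈ Finset.range ((verts K).card + 1), hBetti F K j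

/-- The full subcomplex `K|_J` of `K` on a vertex set `J`. -/
def restr (K : Finset (Finset ℕ)) (J : Finset ℕ) : Finset (Finset ℕ) :=
  K.filter (fun σ => σ ⊆ J)

/-- The total bigraded Betti number `D̃(K; F) = ∑_{J ⊆ V} t̃b(K|_J; F)`
with respect to a ground vertex set `V`. -/
noncomputable def Dtilde (F : Type*) [Field F] (V : Finset ℕ) (K : Finset (Finset ℕ)) : ℕ :=
  ∑ J ∈ V.powerset, rtb F (restr K J)


/-- The `k`-skeleton `Δ^[m]_(k)` of the full simplex on the vertex set
`[m] = {0, 1, …, m-1}`: all subsets of cardinality at most `k + 1`. -/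
def skel (m k : ℕ) : Finset (Finset ℕ) :=
  (Finset.range m).powerset.filter (fun σ => σ.card ≤ k + 1)

/-- The `k`-skeleton of the full simplex on `[m]` for an integer `k`
(so `k = -1` gives the empty complex `{∅}`). -/
def skelZ (m : ℕ) (k : ℤ) : Finset (Finset ℕ) :=
  (Finset.range m).powerset.filter (fun σ => (σ.card : ℤ) ≤ k + 1)

/-- `Δ^[m]_(k)⟨d⟩`: the union of the `k`-skeleton of the full simplex on `[m]`
with the single `d`-simplex `{0, 1, …, d}` and all its faces. -/
def skelD (m k d : ℕ) : Finset (Finset ℕ) :=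
  skel m k ∪ (Finset.range (d + 1)).powerset

/-- `K` and `L` are isomorphic simplicial complexes: some injection of the vertex
set of `K` maps the simplices of `K` exactly onto the simplices of `L`. -/
def SIso (K L : Finset (Finset ℕ)) : Prop :=
  ∃ f : ℕ → ℕ, Set.InjOn f ↑(verts K) ∧ L = K.image (fun σ => σ.image f)

/-- `g(m,d) = ∑_{j=d+1}^{m} C(m,j)·C(j-1,d)`. -/
def g (m d : ℕ) : ℕ := ∑ j ∈ Finset.Icc (d + 1) m, m.choose j * (j - 1).choose d

/-- The join `K * L` of two simplicial complexes (on disjoint vertex sets). -/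
def sJoin (K L : Finset (Finset ℕ)) : Finset (Finset ℕ) :=
  (K ×ˢ L).image fun p => p.1 ∪ p.2

/-- A `d`-dimensional simplicial complex `K` with `m` vertices is tight over `F` if
`D̃(K;F) = 2^{m-d-1}` (note `m - d - 1 = m - (d+1)` and `d + 1 = max σ∈K |σ|`),
where `D̃` is computed with respect to the vertex set of `K`. -/
def IsTight (F : Type*) [Field F] (K : Finset (Finset ℕ)) : Prop :=
  Dtilde F (verts K) K = 2 ^ ((verts K).card - K.sup Finset.card)

/-- The link of a simplex `σ` in `K`. -/
def linkK (K : Finset (Finset ℕ)) (σ : Finset ℕ) : Finset (Finset ℕ) :=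
  K.filter (fun τ => Disjoint τ σ ∧ τ ∪ σ ∈ K)

/-- `K` is pure: every maximal simplex has the maximum cardinality `dim K + 1`. -/
def IsPure (K : Finset (Finset ℕ)) : Prop :=
  ∀ σ ∈ K, (∀ τ ∈ K, σ ⊆ τ → σ = τ) → σ.card = K.sup Finset.card

/-- A near-cone (with apex vertex `0`): for every simplex `S` with `0 ∉ S` and every
`j ∈ S`, `(S \ j) ∪ {0}` is again a simplex. -/
def IsNearCone (Δ : Finset (Finset ℕ)) : Prop :=
  ∀ S ∈ Δ, 0 ∉ S → ∀ j ∈ S, insert 0 (S.erase j) ∈ Δ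

/-- `B(Δ) = {S ∈ Δ : S ∪ {0} ∉ Δ}` for a near-cone `Δ` with apex `0`. -/
def BSet (Δ : Finset (Finset ℕ)) : Finset (Finset ℕ) :=
  Δ.filter (fun S => insert 0 S ∉ Δ)

/-- A Sperner family of the finite set `X`: a family of subsets of `X`, no member
containing another member. -/
def IsSperner (X : Finset ℕ) (F : Finset (Finset ℕ)) : Prop :=
  (∀ A ∈ F, A ⊆ X) ∧ ∀ A ∈ F, ∀ B ∈ F, A ⊆ B → A = B

/-- The geometric realization of `K` is disconnected: the vertex set splits into two
nonempty parts such that every simplex lies entirely in one of the parts. -/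
def IsDisconn (K : Finset (Finset ℕ)) : Prop :=
  ∃ A B : Finset ℕ, A.Nonempty ∧ B.Nonempty ∧ Disjoint A B ∧ A ∪ B = verts K ∧
    ∀ σ ∈ K, σ ⊆ A ∨ σ ⊆ B

/-- The boundary `∂Δ^A` of the full simplex on the vertex set `A`: all proper subsets
of `A`.  (For `|A| = 1` this is the empty complex `{∅}`.) -/
def bdSimplex (A : Finset ℕ) : Finset (Finset ℕ) := A.powerset.erase A



section Dev

open Finset Module

variable (F : Type*) [Field F]

/-! ### Basic vertex lemmas -/

lemma mem_verts_of {K : Finset (Finset ℕ)} {σ : Finset ℕ} {v : ℕ}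
    (hσ : σ ∈ K) (hv : v ∈ σ) : v ∈ verts K :=
  Finset.mem_sup.2 ⟨σ, hσ, hv⟩

lemma verts_mono {K D : Finset (Finset ℕ)} (h : K ⊆ D) : verts K ⊆ verts D :=
  Finset.le_iff_subset.1 (Finset.sup_mono h)

lemma subset_verts {K : Finset (Finset ℕ)} {σ : Finset ℕ} (hσ : σ ∈ K) : σ ⊆ verts K :=
  fun _ hv => mem_verts_of hσ hv

lemma bdry_apply (K : Finset (Finset ℕ)) (j : ℕ) (c : Chain F K (j+1))
    (τ : {σ // σ ∈ K.filter (fun σ => σ.card = j)}) :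
    bdry F K j c τ =
      ∑ v ∈ verts K,
        if h : v ∉ τ.1 ∧ insert v τ.1 ∈ K.filter (fun σ => σ.card = j + 1) then
          (-1 : F) ^ ((τ.1.filter (fun u => u < v)).card) * c ⟨insert v τ.1, h.2⟩
        else 0 := rfl

/-! ### Extension map and support submodule -/

noncomputable def extMap (K D : Finset (Finset ℕ)) (j : ℕ) :
    Chain F K j →ₗ[F] Chain F D j where
  toFun c := fun τ => if h : τ.1 ∈ K.filter (fun σ => σ.card = j) then c ⟨τ.1, h⟩ else 0
  map_add' c d := by
    funext τ
    show _ = (_ : F) + (_ : F)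
    dsimp only
    by_cases h : τ.1 ∈ K.filter (fun σ => σ.card = j)
    · rw [dif_pos h, dif_pos h, dif_pos h]; rfl
    · rw [dif_neg h, dif_neg h, dif_neg h, add_zero]
  map_smul' a c := by
    funext τ
    show _ = a * _
    dsimp only
    by_cases h : τ.1 ∈ K.filter (fun σ => σ.card = j)
    · rw [dif_pos h, dif_pos h]; rfl
    · rw [dif_neg h, dif_neg h, mul_zero]

lemma extMap_apply (K D : Finset (Finset ℕ)) (j : ℕ) (c : Chain F K j)
    (τ : {σ // σ ∈ D.filter (fun σ => σ.card = j)}) :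
    extMap F K D j c τ =
      if h : τ.1 ∈ K.filter (fun σ => σ.card = j) then c ⟨τ.1, h⟩ else 0 := rfl

lemma extMap_injective {K D : Finset (Finset ℕ)} (hKD : K ⊆ D) (j : ℕ) :
    Function.Injective (extMap F K D j) := by
  intro c c' h
  funext σ
  have hmem : σ.1 ∈ D.filter (fun σ => σ.card = j) := by
    have := Finset.mem_filter.1 σ.2
    exact Finset.mem_filter.2 ⟨hKD this.1, this.2⟩
  have := congrFun h ⟨σ.1, hmem⟩
  rw [extMap_apply, extMap_apply, dif_pos σ.2, dif_pos σ.2] at this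
  simpa using this

def suppSub (D K : Finset (Finset ℕ)) (j : ℕ) : Submodule F (Chain F D j) where
  carrier := {c | ∀ τ, τ.1 ∉ K → c τ = 0}
  add_mem' := by intro a b ha hb τ h; simp [Pi.add_apply, ha τ h, hb τ h]
  zero_mem' := by intro τ h; rfl
  smul_mem' := by intro a c hc τ h; simp [Pi.smul_apply, hc τ h]

lemma mem_suppSub {D K : Finset (Finset ℕ)} {j : ℕ} {c : Chain F D j} :
    c ∈ suppSub F D K j ↔ ∀ τ, τ.1 ∉ K → c τ = 0 := Iff.rfl

lemma range_extMap {K D : Finset (Finset ℕ)} (hKD : K ⊆ D) (j : ℕ) :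
    LinearMap.range (extMap F K D j) = suppSub F D K j := by
  apply le_antisymm
  · rintro c ⟨c', rfl⟩ τ hτ
    rw [extMap_apply, dif_neg]
    intro hmem
    exact hτ (Finset.mem_filter.1 hmem).1
  · intro c hc
    refine ⟨fun σ => c ⟨σ.1, by
      have := Finset.mem_filter.1 σ.2
      exact Finset.mem_filter.2 ⟨hKD this.1, this.2⟩⟩, ?_⟩
    funext τ
    rw [extMap_apply]
    by_cases h : τ.1 ∈ K.filter (fun σ => σ.card = j)
    · rw [dif_pos h]
    · rw [dif_neg h]
      refine (hc τ fun hτK => h ?_).symm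
      exact Finset.mem_filter.2 ⟨hτK, (Finset.mem_filter.1 τ.2).2⟩

end Dev
section Dev2
open Finset Module
variable (F : Type*) [Field F]

lemma sign_swap {τ : Finset ℕ} {v w : ℕ} (hv : v ∉ τ) (hw : w ∉ τ) (hvw : v ≠ w) :
    (-1 : F) ^ ((τ.filter (fun u => u < v)).card) *
      (-1 : F) ^ (((insert v τ).filter (fun u => u < w)).card) =
    -((-1 : F) ^ ((τ.filter (fun u => u < w)).card) *
      (-1 : F) ^ (((insert w τ).filter (fun u => u < v)).card)) := by
  rcases hvw.lt_or_gt with h | h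
  · rw [Finset.filter_insert, if_pos h, Finset.filter_insert, if_neg (not_lt.2 h.le),
      Finset.card_insert_of_notMem (fun hm => hv (Finset.mem_filter.1 hm).1), pow_succ]
    ring
  · rw [Finset.filter_insert, if_neg (not_lt.2 h.le), Finset.filter_insert, if_pos h,
      Finset.card_insert_of_notMem (fun hm => hw (Finset.mem_filter.1 hm).1), pow_succ]
    ring

lemma swap_cond {K : Finset (Finset ℕ)} (hK : IsComplex K) {τ : Finset ℕ} {v w j : ℕ}
    (hP : (v ∉ τ ∧ insert v τ ∈ K.filter (fun σ => σ.card = j + 1)) ∧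
      (w ∉ insert v τ ∧ insert w (insert v τ) ∈ K.filter (fun σ => σ.card = j + 1 + 1))) :
    (w ∉ τ ∧ insert w τ ∈ K.filter (fun σ => σ.card = j + 1)) ∧
    (v ∉ insert w τ ∧ insert v (insert w τ) ∈ K.filter (fun σ => σ.card = j + 1 + 1)) := by
  obtain ⟨⟨hv, h1m⟩, ⟨hw2, h2m⟩⟩ := hP
  rw [Finset.mem_filter] at h1m h2m
  have hwv : w ≠ v := fun e => hw2 (by simp [e])
  have hw : w ∉ τ := fun hwτ => hw2 (Finset.mem_insert_of_mem hwτ)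
  have hτc : τ.card = j := by
    have := h1m.2
    rw [Finset.card_insert_of_notMem hv] at this
    omega
  have hcomm : insert v (insert w τ) = insert w (insert v τ) := Finset.insert_comm v w τ
  refine ⟨⟨hw, Finset.mem_filter.2 ⟨?_, ?_⟩⟩, ⟨?_, Finset.mem_filter.2 ⟨?_, ?_⟩⟩⟩
  · exact hK _ h2m.1 _ (Finset.insert_subset_insert w (Finset.subset_insert v τ))
  · rw [Finset.card_insert_of_notMem hw, hτc]
  · intro hm
    rcases Finset.mem_insert.1 hm with e | hvτ
    · exact hwv e.symm
    · exact hv hvτ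
  · rw [hcomm]; exact h2m.1
  · rw [hcomm]; exact h2m.2

lemma bdry_bdry (K : Finset (Finset ℕ)) (hK : IsComplex K) (j : ℕ) :
    (bdry F K j).comp (bdry F K (j + 1)) = 0 := by
  apply LinearMap.ext; intro c
  funext τ
  show bdry F K j (bdry F K (j + 1) c) τ = 0
  rw [bdry_apply]
  have hstep : ∀ v ∈ verts K,
      (if h : v ∉ τ.1 ∧ insert v τ.1 ∈ K.filter (fun σ => σ.card = j + 1) then
        (-1 : F) ^ ((τ.1.filter (fun u => u < v)).card) * bdry F K (j+1) c ⟨insert v τ.1, h.2⟩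
      else 0) =
      ∑ w ∈ verts K,
        (if _ : v ∉ τ.1 ∧ insert v τ.1 ∈ K.filter (fun σ => σ.card = j + 1) then
          (if h2 : w ∉ insert v τ.1 ∧ insert w (insert v τ.1) ∈ K.filter (fun σ => σ.card = j + 1 + 1) then
            (-1 : F) ^ ((τ.1.filter (fun u => u < v)).card) *
              ((-1 : F) ^ (((insert v τ.1).filter (fun u => u < w)).card) * c ⟨insert w (insert v τ.1), h2.2⟩)
          else 0)
        else 0) := by
    intro v _
    by_cases h1 : v ∉ τ.1 ∧ insert v τ.1 ∈ K.filter (fun σ => σ.card = j + 1)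
    · rw [dif_pos h1, bdry_apply, Finset.mul_sum]
      refine Finset.sum_congr rfl fun w _ => ?_
      rw [dif_pos h1, mul_dite, mul_zero]
    · rw [dif_neg h1]
      symm
      apply Finset.sum_eq_zero
      intro w _
      rw [dif_neg h1]
  rw [Finset.sum_congr rfl hstep, ← Finset.sum_product']
  refine Finset.sum_involution (fun p _ => (p.2, p.1)) ?_ ?_ ?_ ?_
  · rintro ⟨v, w⟩ _
    dsimp only
    by_cases hP : (v ∉ τ.1 ∧ insert v τ.1 ∈ K.filter (fun σ => σ.card = j + 1)) ∧
        (w ∉ insert v τ.1 ∧ insert w (insert v τ.1) ∈ K.filter (fun σ => σ.card = j + 1 + 1))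
    · have hP' := swap_cond hK hP
      rw [dif_pos hP.1, dif_pos hP.2, dif_pos hP'.1, dif_pos hP'.2]
      have hvw : v ≠ w := fun e => hP.2.1 (by simp [e])
      have hc : c ⟨insert w (insert v τ.1), hP.2.2⟩ = c ⟨insert v (insert w τ.1), hP'.2.2⟩ := by
        congr 1
        exact Subtype.ext (Finset.insert_comm w v τ.1)
      rw [hc, ← mul_assoc, ← mul_assoc, sign_swap F hP.1.1 hP'.1.1 hvw]
      ring
    · have hP' : ¬ ((w ∉ τ.1 ∧ insert w τ.1 ∈ K.filter (fun σ => σ.card = j + 1)) ∧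
          (v ∉ insert w τ.1 ∧ insert v (insert w τ.1) ∈ K.filter (fun σ => σ.card = j + 1 + 1))) :=
        fun h => hP (swap_cond hK h)
      have z1 : (if h : (v ∉ τ.1 ∧ insert v τ.1 ∈ K.filter (fun σ => σ.card = j + 1)) then
          (if h2 : w ∉ insert v τ.1 ∧ insert w (insert v τ.1) ∈ K.filter (fun σ => σ.card = j + 1 + 1) then
            (-1 : F) ^ ((τ.1.filter (fun u => u < v)).card) *
              ((-1 : F) ^ (((insert v τ.1).filter (fun u => u < w)).card) * c ⟨insert w (insert v τ.1), h2.2⟩)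
          else 0) else 0) = 0 := by
        split_ifs with hA hB
        · exact absurd ⟨hA, hB⟩ hP
        · rfl
        · rfl
      have z2 : (if h : (w ∉ τ.1 ∧ insert w τ.1 ∈ K.filter (fun σ => σ.card = j + 1)) then
          (if h2 : v ∉ insert w τ.1 ∧ insert v (insert w τ.1) ∈ K.filter (fun σ => σ.card = j + 1 + 1) then
            (-1 : F) ^ ((τ.1.filter (fun u => u < w)).card) *
              ((-1 : F) ^ (((insert w τ.1).filter (fun u => u < v)).card) * c ⟨insert v (insert w τ.1), h2.2⟩)
          else 0) else 0) = 0 := by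
        split_ifs with hA hB
        · exact absurd ⟨hA, hB⟩ hP'
        · rfl
        · rfl
      rw [z1, z2, add_zero]
  · rintro ⟨v, w⟩ _ hf heq
    apply hf
    have hw : w = v := (Prod.ext_iff.1 heq).1
    subst hw
    split_ifs with hA hB
    · exact absurd (Finset.mem_insert_self w τ.1) hB.1
    · rfl
    · rfl
  · rintro ⟨v, w⟩ hp
    rw [Finset.mem_product] at hp ⊢
    exact ⟨hp.2, hp.1⟩
  · rintro ⟨v, w⟩ _
    rfl

end Dev2
section Dev3
open Finset Module
variable (F : Type*) [Field F]

lemma bdry_comm (K D : Finset (Finset ℕ)) (hK : IsComplex K) (hKD : K ⊆ D) (j : ℕ) :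
    (bdry F D j).comp (extMap F K D (j + 1)) = (extMap F K D j).comp (bdry F K j) := by
  apply LinearMap.ext; intro c
  funext τ
  show bdry F D j (extMap F K D (j + 1) c) τ = extMap F K D j (bdry F K j c) τ
  rw [bdry_apply, extMap_apply]
  by_cases hτ : τ.1 ∈ K.filter (fun σ => σ.card = j)
  · rw [dif_pos hτ]
    rw [bdry_apply]
    have hstep : ∀ v ∈ verts D,
        (if h : v ∉ τ.1 ∧ insert v τ.1 ∈ D.filter (fun σ => σ.card = j + 1) then
          (-1 : F) ^ ((τ.1.filter (fun u => u < v)).card) * extMap F K D (j+1) c ⟨insert v τ.1, h.2⟩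
        else 0) =
        (if h : v ∉ τ.1 ∧ insert v τ.1 ∈ K.filter (fun σ => σ.card = j + 1) then
          (-1 : F) ^ ((τ.1.filter (fun u => u < v)).card) * c ⟨insert v τ.1, h.2⟩
        else 0) := by
      intro v _
      by_cases hk : v ∉ τ.1 ∧ insert v τ.1 ∈ K.filter (fun σ => σ.card = j + 1)
      · have hd : v ∉ τ.1 ∧ insert v τ.1 ∈ D.filter (fun σ => σ.card = j + 1) := by
          have := Finset.mem_filter.1 hk.2
          exact ⟨hk.1, Finset.mem_filter.2 ⟨hKD this.1, this.2⟩⟩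
        rw [dif_pos hd, dif_pos hk, extMap_apply, dif_pos hk.2]
      · rw [dif_neg hk]
        by_cases hd : v ∉ τ.1 ∧ insert v τ.1 ∈ D.filter (fun σ => σ.card = j + 1)
        · rw [dif_pos hd, extMap_apply, dif_neg, mul_zero]
          intro hmem
          exact hk ⟨hd.1, hmem⟩
        · rw [dif_neg hd]
    rw [Finset.sum_congr rfl hstep]
    refine (Finset.sum_subset (verts_mono hKD) ?_).symm
    intro v _ hv
    rw [dif_neg]
    intro h
    exact hv (mem_verts_of (Finset.mem_filter.1 h.2).1 (Finset.mem_insert_self v τ.1))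
  · rw [dif_neg hτ]
    apply Finset.sum_eq_zero
    intro v _
    by_cases hd : v ∉ τ.1 ∧ insert v τ.1 ∈ D.filter (fun σ => σ.card = j + 1)
    · rw [dif_pos hd, extMap_apply, dif_neg, mul_zero]
      intro hmem
      apply hτ
      refine Finset.mem_filter.2 ⟨?_, (Finset.mem_filter.1 τ.2).2⟩
      exact hK _ (Finset.mem_filter.1 hmem).1 _ (Finset.subset_insert v τ.1)
    · rw [dif_neg hd]

end Dev3
section Dev4
open Finset Module
variable (F : Type*) [Field F]

noncomputable def rk (K : Finset (Finset ℕ)) (j : ℕ) : ℕ :=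
  finrank F (LinearMap.range (bdry F K j))

lemma chain_finrank (K : Finset (Finset ℕ)) (j : ℕ) :
    finrank F (Chain F K j) = (K.filter (fun σ => σ.card = j)).card := by
  rw [Module.finrank_pi]
  simp

lemma rk_eq_map {K D : Finset (Finset ℕ)} (hK : IsComplex K) (hKD : K ⊆ D) (j : ℕ) :
    rk F K j = finrank F (Submodule.map (bdry F D j) (suppSub F D K (j + 1))) := by
  have h1 : Submodule.map (extMap F K D j) (LinearMap.range (bdry F K j)) =
      Submodule.map (bdry F D j) (suppSub F D K (j + 1)) := by
    rw [← LinearMap.range_comp, ← bdry_comm F K D hK hKD j, LinearMap.range_comp,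
      range_extMap F hKD (j + 1)]
  rw [rk, ← h1]
  exact (Submodule.equivMapOfInjective _ (extMap_injective F hKD j) _).finrank_eq

lemma rk_eq_zero (K : Finset (Finset ℕ)) (j : ℕ) (hj : (verts K).card ≤ j) :
    rk F K j = 0 := by
  have hb : bdry F K j = 0 := by
    apply LinearMap.ext; intro c
    have hc : c = 0 := by
      funext σ
      exfalso
      have h1 := Finset.mem_filter.1 σ.2
      have h2 : σ.1.card ≤ (verts K).card := Finset.card_le_card (subset_verts h1.1)
      omega
    rw [hc, map_zero]
    rfl
  rw [rk, hb, LinearMap.range_zero, finrank_bot]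

lemma sum_hBetti (K : Finset (Finset ℕ)) (hK : IsComplex K) (n : ℕ) :
    (∑ j ∈ Finset.range (n + 1), hBetti F K j) + 2 * (∑ j ∈ Finset.range (n + 1), rk F K j) =
      (∑ j ∈ Finset.range (n + 1), (K.filter (fun σ => σ.card = j)).card) + rk F K n := by
  induction n with
  | zero =>
    have h0 : rk F K 0 ≤ finrank F (Chain F K 0) := Submodule.finrank_le _
    have e : hBetti F K 0 = finrank F (Chain F K 0) - rk F K 0 := rfl
    have ec := chain_finrank F K 0
    simp only [zero_add, Finset.sum_range_one]
    omega
  | succ n ih =>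
    rw [Finset.sum_range_succ (f := fun j => hBetti F K j),
      Finset.sum_range_succ (f := fun j => rk F K j),
      Finset.sum_range_succ (f := fun j => (K.filter (fun σ => σ.card = j)).card)]
    have e1 : hBetti F K (n + 1) =
        finrank F (LinearMap.ker (bdry F K n)) - rk F K (n + 1) := rfl
    have e2 : rk F K n + finrank F (LinearMap.ker (bdry F K n)) = finrank F (Chain F K (n + 1)) :=
      LinearMap.finrank_range_add_finrank_ker (bdry F K n)
    have e3 : rk F K (n + 1) ≤ finrank F (LinearMap.ker (bdry F K n)) := by
      apply Submodule.finrank_mono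
      exact LinearMap.range_le_ker_iff.2 (bdry_bdry F K hK n)
    have e4 := chain_finrank F K (n + 1)
    omega

lemma empty_mem_of_nonempty {K : Finset (Finset ℕ)} (hK : IsComplex K) (hne : K.Nonempty) :
    (∅ : Finset ℕ) ∈ K := by
  obtain ⟨σ, hσ⟩ := hne
  exact hK σ hσ ∅ (Finset.empty_subset σ)

lemma rtb_eq (K : Finset (Finset ℕ)) (hK : IsComplex K) (hne : K.Nonempty) (N : ℕ)
    (hN : (verts K).card < N) :
    rtb F K + 2 * (∑ j ∈ Finset.range N, rk F K j) = K.card := by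
  rw [rtb, if_neg hne.ne_empty]
  have hsum : ∑ j ∈ Finset.range N, rk F K j =
      ∑ j ∈ Finset.range ((verts K).card + 1), rk F K j := by
    symm
    apply Finset.sum_subset (Finset.range_subset_range.2 hN)
    intro j _ hj
    rw [Finset.mem_range, not_lt] at hj
    exact rk_eq_zero F K j (by omega)
  rw [hsum, sum_hBetti F K hK, rk_eq_zero F K _ le_rfl, add_zero]
  symm
  apply Finset.card_eq_sum_card_fiberwise
  intro σ hσ
  rw [Finset.mem_coe, Finset.mem_range]
  have := Finset.card_le_card (subset_verts hσ)
  omega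

end Dev4
section Dev5
open Finset Module
variable (F : Type*) [Field F]

lemma suppSub_inter (D K L : Finset (Finset ℕ)) (j : ℕ) :
    suppSub F D (K ∩ L) j = suppSub F D K j ⊓ suppSub F D L j := by
  ext c
  constructor
  · intro h
    exact ⟨fun τ hτ => h τ fun hm => hτ (Finset.mem_inter.1 hm).1,
      fun τ hτ => h τ fun hm => hτ (Finset.mem_inter.1 hm).2⟩
  · rintro ⟨h1, h2⟩ τ hτ
    by_cases hk : τ.1 ∈ K
    · exact h2 τ fun hl => hτ (Finset.mem_inter.2 ⟨hk, hl⟩)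
    · exact h1 τ hk

lemma suppSub_union_le (D K L : Finset (Finset ℕ)) (j : ℕ) :
    suppSub F D (K ∪ L) j ≤ suppSub F D K j ⊔ suppSub F D L j := by
  intro c hc
  classical
  refine Submodule.mem_sup.2
    ⟨fun τ => if τ.1 ∈ K then c τ else 0, ?_, fun τ => if τ.1 ∈ K then 0 else c τ, ?_, ?_⟩
  · intro τ hτ
    dsimp only
    rw [if_neg hτ]
  · intro τ hτ
    dsimp only
    by_cases hk : τ.1 ∈ K
    · rw [if_pos hk]
    · rw [if_neg hk]
      exact hc τ fun hm => (Finset.mem_union.1 hm).elim hk hτ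
  · funext τ
    show (if τ.1 ∈ K then c τ else 0) + (if τ.1 ∈ K then 0 else c τ) = c τ
    by_cases hk : τ.1 ∈ K
    · rw [if_pos hk, if_pos hk, add_zero]
    · rw [if_neg hk, if_neg hk, zero_add]

lemma union_complex {K L : Finset (Finset ℕ)} (hK : IsComplex K) (hL : IsComplex L) :
    IsComplex (K ∪ L) := by
  intro σ hσ τ hτ
  rcases Finset.mem_union.1 hσ with h | h
  · exact Finset.mem_union_left _ (hK σ h τ hτ)
  · exact Finset.mem_union_right _ (hL σ h τ hτ)

lemma inter_complex {K L : Finset (Finset ℕ)} (hK : IsComplex K) (hL : IsComplex L) :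
    IsComplex (K ∩ L) := by
  intro σ hσ τ hτ
  rw [Finset.mem_inter] at hσ ⊢
  exact ⟨hK σ hσ.1 τ hτ, hL σ hσ.2 τ hτ⟩

lemma rk_submod (K L : Finset (Finset ℕ)) (hK : IsComplex K) (hL : IsComplex L) (j : ℕ) :
    rk F (K ∩ L) j + rk F (K ∪ L) j ≤ rk F K j + rk F L j := by
  have hKD : K ⊆ K ∪ L := Finset.subset_union_left
  have hLD : L ⊆ K ∪ L := Finset.subset_union_right
  rw [rk_eq_map F hK hKD j, rk_eq_map F hL hLD j,
    rk_eq_map F (inter_complex hK hL) (Finset.inter_subset_left.trans hKD) j,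
    rk_eq_map F (union_complex hK hL) (subset_refl _) j]
  set f := bdry F (K ∪ L) j
  set SK := suppSub F (K ∪ L) K (j + 1)
  set SL := suppSub F (K ∪ L) L (j + 1)
  have h1 : finrank F (Submodule.map f (suppSub F (K ∪ L) (K ∩ L) (j + 1))) ≤
      finrank F ((Submodule.map f SK) ⊓ (Submodule.map f SL) : Submodule F _) := by
    apply Submodule.finrank_mono
    rw [suppSub_inter]
    exact Submodule.map_inf_le f
  have h2 : finrank F (Submodule.map f (suppSub F (K ∪ L) (K ∪ L) (j + 1))) ≤
      finrank F ((Submodule.map f SK) ⊔ (Submodule.map f SL) : Submodule F _) := by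
    apply Submodule.finrank_mono
    rw [← Submodule.map_sup]
    exact Submodule.map_mono (suppSub_union_le F (K ∪ L) K L (j + 1))
  have h3 := Submodule.finrank_sup_add_finrank_inf_eq
    (Submodule.map f SK) (Submodule.map f SL)
  omega

lemma main_pair (K L : Finset (Finset ℕ)) (hK : IsComplex K) (hL : IsComplex L) :
    rtb F K + rtb F L ≤ rtb F (K ∩ L) + rtb F (K ∪ L) := by
  rcases eq_or_ne K ∅ with rfl | hKne
  · rw [Finset.empty_inter, Finset.empty_union]
  rcases eq_or_ne L ∅ with rfl | hLne
  · rw [Finset.inter_empty, Finset.union_empty]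
    exact le_of_eq (add_comm _ _)
  have hKn : K.Nonempty := Finset.nonempty_of_ne_empty hKne
  have hLn : L.Nonempty := Finset.nonempty_of_ne_empty hLne
  set N := (verts (K ∪ L)).card + 1 with hN
  have hle : ∀ {A : Finset (Finset ℕ)}, A ⊆ K ∪ L → (verts A).card < N :=
    fun hA => by
      have := Finset.card_le_card (verts_mono hA)
      omega
  have e1 := rtb_eq F K hK hKn N (hle Finset.subset_union_left)
  have e2 := rtb_eq F L hL hLn N (hle Finset.subset_union_right)
  have e3 := rtb_eq F (K ∩ L) (inter_complex hK hL)
    ⟨∅, Finset.mem_inter.2 ⟨empty_mem_of_nonempty hK hKn, empty_mem_of_nonempty hL hLn⟩⟩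
    N (hle (Finset.inter_subset_left.trans Finset.subset_union_left))
  have e4 := rtb_eq F (K ∪ L) (union_complex hK hL)
    (hKn.mono Finset.subset_union_left) N (hle (subset_refl _))
  have hr : (∑ j ∈ Finset.range N, rk F (K ∩ L) j) + (∑ j ∈ Finset.range N, rk F (K ∪ L) j) ≤
      (∑ j ∈ Finset.range N, rk F K j) + (∑ j ∈ Finset.range N, rk F L j) := by
    rw [← Finset.sum_add_distrib, ← Finset.sum_add_distrib]
    exact Finset.sum_le_sum fun j _ => rk_submod F K L hK hL j
  have hcard := Finset.card_inter_add_card_union K L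
  omega

lemma restr_complex {K : Finset (Finset ℕ)} (hK : IsComplex K) (J : Finset ℕ) :
    IsComplex (restr K J) := by
  intro σ hσ τ hτ
  rw [restr, Finset.mem_filter] at hσ ⊢
  exact ⟨hK σ hσ.1 τ hτ, hτ.trans hσ.2⟩

end Dev5
/-- Submodularity of the total bigraded Betti number: for complexes
`K`, `L` with vertex set `[m]`, `D̃(K) + D̃(L) ≤ D̃(K ∩ L) + D̃(K ∪ L)`. -/
theorem stmt7 (F : Type*) [Field F] (m : ℕ) (K L : Finset (Finset ℕ))
    (hK : IsComplex K) (hL : IsComplex L)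
    (hvK : verts K = Finset.range m) (hvL : verts L = Finset.range m) :
    Dtilde F (Finset.range m) K + Dtilde F (Finset.range m) L ≤
      Dtilde F (Finset.range m) (K ∩ L) + Dtilde F (Finset.range m) (K ∪ L) := by
  unfold Dtilde
  rw [← Finset.sum_add_distrib, ← Finset.sum_add_distrib]
  apply Finset.sum_le_sum
  intro J _
  have h1 : restr (K ∩ L) J = restr K J ∩ restr L J := Finset.filter_inter_distrib _ _ _
  have h2 : restr (K ∪ L) J = restr K J ∪ restr L J := Finset.filter_union _ _ _
  rw [h1, h2]
  exact main_pair F _ _ (restr_complex hK J) (restr_complex hL J)
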